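/- arXiv:1409.3797 — 3 statements merged into one kernel-verified Lean document; each statement's English description precedes it below -/
import Mathlib

section
/- Let $p$ be a prime and $\chi$ a nontrivial multiplicative character modulo $p$. Then for all $m, n \in \mathbb{F}_p$, $g_\chi \cdot \mathfrak{S}_\chi(m,n) = \sum_{x_1 \in \mathbb{F}_p^{\star}} \sum_{x_2 \in \mathbb{F}_p^{\star}} \chi(x_1)\chi(x_2)\, e\big((n x_1 + m x_2 + x_1 x_2)/p\big)$. -/
/-- `e(z) = exp(2πiz)`. -/
noncomputable def e (z : ℝ) : ℂ := Complex.exp (2 * Real.pi * Complex.I * z)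

/-- The character sum `𝔖_χ(m,n) = ∑_{x ∈ 𝔽_p*} χ(x) χ̄(m+x) e(nx/p)`; since `χ(0) = 0`
for a multiplicative character, the sum may be taken over all of `ZMod p`. -/
noncomputable def frakS (p : ℕ) [NeZero p] (χ : MulChar (ZMod p) ℂ) (m n : ZMod p) : ℂ :=
  ∑ x : ZMod p, χ x * (starRingEnd ℂ) (χ (m + x)) * e (((n.val * x.val : ℕ) : ℝ) / p)

/-- The Gauss sum `g_χ = ∑_{a ∈ 𝔽_p*} χ(a) e(a/p)` (again `χ(0) = 0`). -/
noncomputable def gaussSumE (p : ℕ) [NeZero p] (χ : MulChar (ZMod p) ℂ) : ℂ :=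
  ∑ a : ZMod p, χ a * e ((a.val : ℝ) / p)

noncomputable def psi (p : ℕ) [NeZero p] (a : ZMod p) : ℂ := e ((a.val : ℝ) / p)

lemma e_add (x y : ℝ) : e (x + y) = e x * e y := by
  simp [e, mul_add, Complex.exp_add]

lemma e_nat (k : ℕ) : e k = 1 := by
  simpa [e, mul_comm] using Complex.exp_nat_mul_two_pi_mul_I k

lemma e_natCast (p : ℕ) [NeZero p] (k : ℕ) : e ((k : ℝ) / p) = psi p (k : ZMod p) := by
  have hp : (p : ℝ) ≠ 0 := Nat.cast_ne_zero.mpr (NeZero.ne p)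
  have h : (k : ℝ) / p = ((k % p : ℕ) : ℝ) / p + ((k / p : ℕ) : ℝ) := by
    field_simp
    rw [← Nat.cast_mul, ← Nat.cast_add, Nat.mod_add_div k p]
  rw [h, e_add, e_nat, mul_one, psi, ZMod.val_natCast]

lemma psi_add (p : ℕ) [NeZero p] (a b : ZMod p) : psi p (a + b) = psi p a * psi p b := by
  have h1 : psi p a * psi p b = e (((a.val + b.val : ℕ) : ℝ) / p) := by
    push_cast
    rw [add_div, e_add]; rfl
  rw [h1, e_natCast]
  congr 1
  push_cast [ZMod.natCast_val, ZMod.cast_id]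
  ring

/-- For `p` prime and `χ` a nontrivial multiplicative character mod `p`,
`g_χ · 𝔖_χ(m,n) = ∑_{x₁,x₂ ∈ 𝔽_p*} χ(x₁)χ(x₂) e((n x₁ + m x₂ + x₁x₂)/p)`. -/
theorem gauss_mul_frakS (p : ℕ) [Fact p.Prime] (χ : MulChar (ZMod p) ℂ) (hχ : χ ≠ 1)
    (m n : ZMod p) :
    gaussSumE p χ * frakS p χ m n =
      ∑ x₁ : ZMod p, ∑ x₂ : ZMod p, χ x₁ * χ x₂ *
        e (((n.val * x₁.val + m.val * x₂.val + x₁.val * x₂.val : ℕ) : ℝ) / p) := by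
  have hconj : ∀ a : ZMod p, a ≠ 0 → (starRingEnd ℂ) (χ a) * χ a = 1 := by
    intro a ha
    have h1 : (starRingEnd ℂ) (χ a) = χ⁻¹ a := by
      rw [← MulChar.star_apply']; rfl
    rw [h1, ← Pi.mul_apply, ← MulChar.coeToFun_mul, MulChar.inv_mul,
      MulChar.one_apply (isUnit_iff_ne_zero.mpr ha)]
  rw [gaussSumE, frakS, Finset.sum_mul_sum, Finset.sum_comm]
  simp only [e_natCast p]
  simp only [Nat.cast_add, Nat.cast_mul, ZMod.natCast_val, ZMod.cast_id]
  refine Finset.sum_congr rfl fun x _ => ?_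
  rcases eq_or_ne (m + x) 0 with hx | hx
  · have h0 : (starRingEnd ℂ) (χ (m + x)) = 0 := by
      rw [hx, MulChar.map_zero, map_zero]
    simp only [h0, mul_zero, zero_mul, Finset.sum_const_zero]
    symm
    calc ∑ x₂ : ZMod p, χ x * χ x₂ * psi p (n * x + m * x₂ + x * x₂)
        = ∑ x₂ : ZMod p, (χ x * psi p (n * x)) * χ x₂ := by
          refine Finset.sum_congr rfl fun x₂ _ => ?_
          have : n * x + m * x₂ + x * x₂ = n * x := by
            rw [add_assoc, ← add_mul, hx, zero_mul, add_zero]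
          rw [this]; ring
      _ = 0 := by rw [← Finset.mul_sum, MulChar.sum_eq_zero_of_ne_one hχ, mul_zero]
  · symm
    refine Fintype.sum_equiv (Equiv.mulRight₀ (m + x) hx) _ _ fun x₂ => ?_
    have heq : (Equiv.mulRight₀ (m + x) hx) x₂ = x₂ * (m + x) := rfl
    rw [heq, map_mul]
    have h1 : psi p (x₂ * (m + x)) * psi p (n * x) = psi p (n * x + m * x₂ + x * x₂) := by
      rw [← psi_add]; congr 1; ring
    rw [← h1]
    have h2 := hconj (m + x) hx
    linear_combination (-(χ x * χ x₂ * psi p (x₂ * (m + x)) * psi p (n * x))) * h2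
end

section
/- Let $Q > 1$, $c \in \mathbb{R}$, and let $h : (0,\infty) \times \mathbb{R} \to \mathbb{R}$ be a function that vanishes whenever its first argument exceeds $\max\{1, 2|y|\}$ (where $y$ is the second argument). Suppose that for every integer $n$, $\delta(n,0) = \frac{c}{Q^2} \sum_{q=1}^{\infty} \sideset{}{^{\star}}\sum_{a \bmod q} e\big(\tfrac{an}{q}\big)\, h\big(\tfrac{q}{Q}, \tfrac{n}{Q^2}\big)$ (the sum over $q$ having only finitely many nonzero terms by the support condition). Then for every positive integer $K$ and every integer $n$, $\delta(n,0) = \frac{c}{K Q^2} \sum_{q=1}^{\infty} \sideset{}{^{\star}}\sum_{a \bmod q} \sum_{b \bmod K} e\big(\tfrac{an}{qK}\big)\, e\big(\tfrac{bn}{K}\big)\, h\big(\tfrac{q}{Q}, \tfrac{n}{KQ^2}\big)$. -/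
/-- `δ(n,0)`: equal to `1` if `n = 0` and `0` otherwise. -/
def deltaSymbol (n : ℤ) : ℂ := if n = 0 then 1 else 0

lemma e_int (k : ℤ) : e (k : ℝ) = 1 := by
  unfold e
  rw [show ((2 : ℂ) * Real.pi * Complex.I * ((k : ℝ) : ℂ)) = (k : ℂ) * (2 * Real.pi * Complex.I) by
    push_cast; ring]
  exact Complex.exp_int_mul_two_pi_mul_I k

lemma sum_e (K : ℕ+) (n : ℤ) :
    ∑ b ∈ Finset.range (K : ℕ), e ((b : ℝ) * n / K) =
      if (K : ℤ) ∣ n then ((K : ℕ) : ℂ) else 0 := by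
  have hKr : ((K : ℕ) : ℝ) ≠ 0 := by positivity
  by_cases hd : (K : ℤ) ∣ n
  · rw [if_pos hd]
    obtain ⟨m, rfl⟩ := hd
    have h1 : ∀ b ∈ Finset.range (K : ℕ), e ((b : ℝ) * ((K : ℤ) * m : ℤ) / K) = 1 := by
      intro b _
      have : ((b : ℝ) * (((K : ℤ) * m : ℤ) : ℝ) / (K : ℕ)) = (((b : ℤ) * m : ℤ) : ℝ) := by
        push_cast; field_simp
      rw [this, e_int]
    rw [Finset.sum_congr rfl h1]
    simp
  · rw [if_neg hd]
    have hK : ((K : ℕ) : ℂ) ≠ 0 := Nat.cast_ne_zero.mpr K.pos.ne'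
    set x := e ((n : ℝ) / K) with hx
    have hb : ∀ b : ℕ, e ((b : ℝ) * n / K) = x ^ b := by
      intro b
      rw [hx]; unfold e
      rw [← Complex.exp_nat_mul]
      congr 1
      push_cast
      ring
    have hxK : x ^ (K : ℕ) = 1 := by
      have h2 := hb (K : ℕ)
      have harg : (((K : ℕ) : ℝ)) * (n : ℝ) / ((K : ℕ+) : ℝ) = ((n : ℤ) : ℝ) := by
        field_simp
      rw [harg, e_int] at h2
      exact h2.symm
    have hx1 : x ≠ 1 := by
      intro hone
      rw [hx] at hone; unfold e at hone
      rw [Complex.exp_eq_one_iff] at hone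
      obtain ⟨m, hm⟩ := hone
      push_cast at hm
      have h2pi : (2 : ℂ) * Real.pi * Complex.I ≠ 0 := by
        simp [Real.pi_ne_zero, Complex.I_ne_zero]
      have hc : (n : ℂ) / (K : ℕ) = (m : ℂ) :=
        mul_left_cancel₀ h2pi (by linear_combination hm)
      have hc2 : (n : ℂ) = ((K : ℕ) : ℂ) * m := by
        rw [(div_eq_iff hK).mp hc]; ring
      exact hd ⟨m, by exact_mod_cast hc2⟩
    calc ∑ b ∈ Finset.range (K : ℕ), e ((b : ℝ) * n / K)
        = ∑ b ∈ Finset.range (K : ℕ), x ^ b := Finset.sum_congr rfl fun b _ => hb b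
      _ = (x ^ (K : ℕ) - 1) / (x - 1) := geom_sum_eq hx1 _
      _ = 0 := by rw [hxK]; simp

/-- Modified δ-symbol identity: if the δ-symbol admits the expansion
`δ(n,0) = (c/Q²) ∑_q ∑*_{a mod q} e(an/q) h(q/Q, n/Q²)` for all integers `n`,
then for every positive integer `K` and integer `n`,
`δ(n,0) = (c/(KQ²)) ∑_q ∑*_{a mod q} ∑_{b mod K} e(an/(qK)) e(bn/K) h(q/Q, n/(KQ²))`. -/
theorem delta_symbol_modified (Q : ℝ) (hQ : 1 < Q) (c : ℝ) (h : ℝ → ℝ → ℝ)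
    (hvanish : ∀ x y : ℝ, max 1 (2 * |y|) < x → h x y = 0)
    (hyp : ∀ n : ℤ, deltaSymbol n =
      (c / Q ^ 2) * ∑' q : ℕ+, ∑ a ∈ (Finset.range (q : ℕ)).filter (fun a => a.Coprime q),
        e ((a : ℝ) * n / q) * (h ((q : ℝ) / Q) ((n : ℝ) / Q ^ 2) : ℂ)) :
    ∀ (K : ℕ+) (n : ℤ), deltaSymbol n =
      (c / ((K : ℝ) * Q ^ 2)) * ∑' q : ℕ+,
        ∑ a ∈ (Finset.range (q : ℕ)).filter (fun a => a.Coprime q),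
          ∑ b ∈ Finset.range (K : ℕ),
            e ((a : ℝ) * n / ((q : ℝ) * K)) * e ((b : ℝ) * n / K) *
              (h ((q : ℝ) / Q) ((n : ℝ) / ((K : ℝ) * Q ^ 2)) : ℂ) := by
  intro K n
  have hQ0 : Q ≠ 0 := by linarith
  have hKr : ((K : ℕ) : ℝ) ≠ 0 := by positivity
  have hKc : ((K : ℕ) : ℂ) ≠ 0 := Nat.cast_ne_zero.mpr K.pos.ne'
  have hQc : (Q : ℂ) ≠ 0 := Complex.ofReal_ne_zero.mpr hQ0
  by_cases hd : (K : ℤ) ∣ n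
  · obtain ⟨m, hm⟩ := hd
    have hnr : (n : ℝ) = ((K : ℕ) : ℝ) * (m : ℝ) := by rw [hm]; push_cast; ring
    have key : ∀ q : ℕ+,
        (∑ a ∈ (Finset.range (q : ℕ)).filter (fun a => a.Coprime q),
          ∑ b ∈ Finset.range (K : ℕ),
            e ((a : ℝ) * n / ((q : ℝ) * K)) * e ((b : ℝ) * n / K) *
              (h ((q : ℝ) / Q) ((n : ℝ) / ((K : ℝ) * Q ^ 2)) : ℂ))
        = ((K : ℕ) : ℂ) * ∑ a ∈ (Finset.range (q : ℕ)).filter (fun a => a.Coprime q),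
            e ((a : ℝ) * m / q) * (h ((q : ℝ) / Q) ((m : ℝ) / Q ^ 2) : ℂ) := by
      intro q
      rw [Finset.mul_sum]
      refine Finset.sum_congr rfl fun a _ => ?_
      have hq : ((q : ℕ) : ℝ) ≠ 0 := by positivity
      have hsum : ∑ b ∈ Finset.range (K : ℕ), e ((b : ℝ) * n / K) = ((K : ℕ) : ℂ) := by
        rw [sum_e, if_pos ⟨m, hm⟩]
      have e1 : (a : ℝ) * n / ((q : ℝ) * K) = (a : ℝ) * m / q := by
        rw [hnr]; field_simp
      have e2 : (n : ℝ) / ((K : ℝ) * Q ^ 2) = (m : ℝ) / Q ^ 2 := by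
        rw [hnr]; field_simp
      rw [e1, e2]
      calc ∑ b ∈ Finset.range (K : ℕ),
            e ((a : ℝ) * m / q) * e ((b : ℝ) * n / K) * (h ((q : ℝ) / Q) ((m : ℝ) / Q ^ 2) : ℂ)
          = (e ((a : ℝ) * m / q) * (h ((q : ℝ) / Q) ((m : ℝ) / Q ^ 2) : ℂ)) *
              ∑ b ∈ Finset.range (K : ℕ), e ((b : ℝ) * n / K) := by
            rw [Finset.mul_sum]; exact Finset.sum_congr rfl fun b _ => by ring
        _ = _ := by rw [hsum]; ring
    have hdm : deltaSymbol n = deltaSymbol m := by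
      unfold deltaSymbol
      have hiff : n = 0 ↔ m = 0 := by
        constructor
        · intro h0; rw [h0] at hm
          exact (mul_eq_zero.mp hm.symm).resolve_left (by exact_mod_cast K.pos.ne')
        · intro h0; rw [hm, h0, mul_zero]
      simp [hiff]
    rw [hdm, hyp m, tsum_congr key, tsum_mul_left]
    rw [← mul_assoc]
    congr 1
    push_cast
    field_simp
  · have hn0 : n ≠ 0 := fun h0 => hd (h0 ▸ dvd_zero _)
    have key : ∀ q : ℕ+,
        (∑ a ∈ (Finset.range (q : ℕ)).filter (fun a => a.Coprime q),
          ∑ b ∈ Finset.range (K : ℕ),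
            e ((a : ℝ) * n / ((q : ℝ) * K)) * e ((b : ℝ) * n / K) *
              (h ((q : ℝ) / Q) ((n : ℝ) / ((K : ℝ) * Q ^ 2)) : ℂ)) = 0 := by
      intro q
      refine Finset.sum_eq_zero fun a _ => ?_
      have hsum : ∑ b ∈ Finset.range (K : ℕ), e ((b : ℝ) * n / K) = 0 := by
        rw [sum_e, if_neg hd]
      calc ∑ b ∈ Finset.range (K : ℕ),
            e ((a : ℝ) * n / ((q : ℝ) * K)) * e ((b : ℝ) * n / K) *
              (h ((q : ℝ) / Q) ((n : ℝ) / ((K : ℝ) * Q ^ 2)) : ℂ)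
          = (e ((a : ℝ) * n / ((q : ℝ) * K)) *
              (h ((q : ℝ) / Q) ((n : ℝ) / ((K : ℝ) * Q ^ 2)) : ℂ)) *
              ∑ b ∈ Finset.range (K : ℕ), e ((b : ℝ) * n / K) := by
            rw [Finset.mul_sum]; exact Finset.sum_congr rfl fun b _ => by ring
        _ = 0 := by rw [hsum, mul_zero]
    rw [tsum_congr key]
    simp [deltaSymbol, hn0]
end

section
/- Let $M_1, M_2, M_3$ be distinct primes and $\chi_1$ a nontrivial multiplicative character modulo $M_1$. Let $q_1, q_2$ be positive integers coprime to $M_1 M_3$, let $m_1, m_2$ be integers, and let $\bar{M}_3$ denote an inverse of $M_3$ modulo $q_1 q_2$. Define $\mathfrak{C}(m_1, m_2, 0; q_1, q_2) = \sum_{\substack{a \bmod q_1 q_2 M_1 \\ a \equiv -M_2\bar{M}_3 m_1 \bmod q_1,\ a \equiv -M_2\bar{M}_3 m_2 \bmod q_2}} \bar{\chi}_1(M_2 m_1 + M_3 a)\, \chi_1(M_2 m_2 + M_3 a)$. Then $|\mathfrak{C}(m_1, m_2, 0; q_1, q_2)| \le \gcd(q_1, q_2) \cdot \gcd(m_1 -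 m_2, M_1)$. -/
open scoped Classical in
/-- The character sum `𝔠(m₁, m₂, n; q₁, q₂)`: the sum over residues `a mod q₁q₂M₁` with
`a ≡ -M₂M̄₃m₁ (mod q₁)` and `a ≡ -M₂M̄₃m₂ (mod q₂)` of
`χ̄₁(M₂m₁ + M₃a) χ₁(M₂m₂ + M₃a) e(na/(q₁q₂M₁))`. -/
noncomputable def frakC (M₁ M₂ M₃ q₁ q₂ : ℕ) (χ₁ : MulChar (ZMod M₁) ℂ)
    (M₃bar m₁ m₂ n : ℤ) : ℂ :=
  ∑ a ∈ (Finset.range (q₁ * q₂ * M₁)).filter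
      (fun a => ((a : ℤ) ≡ -((M₂ : ℤ) * M₃bar * m₁) [ZMOD (q₁ : ℤ)]) ∧
                ((a : ℤ) ≡ -((M₂ : ℤ) * M₃bar * m₂) [ZMOD (q₂ : ℤ)])),
    (starRingEnd ℂ) (χ₁ (((M₂ : ℤ) * m₁ + (M₃ : ℤ) * a : ℤ) : ZMod M₁)) *
      χ₁ (((M₂ : ℤ) * m₂ + (M₃ : ℤ) * a : ℤ) : ZMod M₁) *
      e (((n * a : ℤ) : ℝ) / ((q₁ : ℝ) * q₂ * M₁))

lemma charSum_eq_neg_one {p : ℕ} [Fact p.Prime] (χ : MulChar (ZMod p) ℂ) (hχ : χ ≠ 1)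
    (c : ZMod p) (hc : c ≠ 0) :
    ∑ u : ZMod p, (starRingEnd ℂ) (χ u) * χ (u + c) = -1 := by
  classical
  have h0 : (starRingEnd ℂ) (χ (0 : ZMod p)) * χ (0 + c) = 0 := by
    rw [χ.map_nonunit not_isUnit_zero]; simp
  rw [← Finset.add_sum_erase _ _ (Finset.mem_univ (0 : ZMod p)), h0, zero_add]
  have step : ∑ u ∈ Finset.univ.erase (0 : ZMod p), (starRingEnd ℂ) (χ u) * χ (u + c)
      = ∑ v ∈ Finset.univ.erase (1 : ZMod p), χ v := by
    refine Finset.sum_nbij' (fun u => 1 + c * u⁻¹) (fun v => c * (v - 1)⁻¹) ?_ ?_ ?_ ?_ ?_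
    · intro u hu
      have hu0 : u ≠ 0 := Finset.ne_of_mem_erase hu
      refine Finset.mem_erase.mpr ⟨?_, Finset.mem_univ _⟩
      intro h
      have : c * u⁻¹ = 0 := by linear_combination h
      exact hc (by
        have := mul_eq_zero.mp this
        rcases this with h | h
        · exact h
        · exact absurd h (inv_ne_zero hu0))
    · intro v hv
      have hv1 : v ≠ 1 := Finset.ne_of_mem_erase hv
      refine Finset.mem_erase.mpr ⟨?_, Finset.mem_univ _⟩
      exact mul_ne_zero hc (inv_ne_zero (sub_ne_zero.mpr hv1))
    · intro u hu
      have hu0 : u ≠ 0 := Finset.ne_of_mem_erase hu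
      field_simp
      simp [hc]
    · intro v hv
      have hv1 : v ≠ 1 := Finset.ne_of_mem_erase hv
      have h1 : v - 1 ≠ 0 := sub_ne_zero.mpr hv1
      field_simp
      ring
    · intro u hu
      have hu0 : u ≠ 0 := Finset.ne_of_mem_erase hu
      have hnorm : ‖χ u‖ = 1 := by
        have := DirichletCharacter.unit_norm_eq_one χ (Ne.isUnit hu0).unit
        rwa [IsUnit.unit_spec] at this
      have hconj : (starRingEnd ℂ) (χ u) = χ u⁻¹ := by
        rw [← Complex.inv_eq_conj hnorm]
        exact inv_eq_of_mul_eq_one_right (by rw [← map_mul, mul_inv_cancel₀ hu0, map_one])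
      rw [hconj, ← map_mul]
      congr 1
      field_simp
  rw [step]
  have htot : ∑ v : ZMod p, χ v = 0 := MulChar.sum_eq_zero_of_ne_one hχ
  have := Finset.add_sum_erase _ χ (Finset.mem_univ (1 : ZMod p))
  rw [htot, MulChar.map_one] at this
  linear_combination this

lemma charSum_bound₀ {p : ℕ} [Fact p.Prime] (χ : MulChar (ZMod p) ℂ) (c : ZMod p) :
    ‖∑ u : ZMod p, (starRingEnd ℂ) (χ u) * χ (u + c)‖ ≤ (p : ℝ) := by
  calc ‖∑ u : ZMod p, (starRingEnd ℂ) (χ u) * χ (u + c)‖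
      ≤ ∑ u : ZMod p, ‖(starRingEnd ℂ) (χ u) * χ (u + c)‖ := norm_sum_le _ _
    _ ≤ ∑ _u : ZMod p, (1 : ℝ) := by
        refine Finset.sum_le_sum fun u _ => ?_
        rw [norm_mul, RCLike.norm_conj]
        exact mul_le_one₀ (DirichletCharacter.norm_le_one χ u) (norm_nonneg _)
          (DirichletCharacter.norm_le_one χ _)
    _ = (p : ℝ) := by simp [ZMod.card]

open scoped Classical in
lemma count_bound (q₁ q₂ : ℕ) (hq₁ : 0 < q₁) (hq₂ : 0 < q₂) (c₁ c₂ : ℤ) :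
    ((Finset.range (q₁ * q₂)).filter
      (fun a : ℕ => ((a : ℤ) ≡ c₁ [ZMOD (q₁ : ℤ)]) ∧ ((a : ℤ) ≡ c₂ [ZMOD (q₂ : ℤ)]))).card
      ≤ Nat.gcd q₁ q₂ := by
  set L := Nat.lcm q₁ q₂ with hLdef
  have hL : 0 < L := Nat.pos_of_ne_zero (Nat.lcm_ne_zero hq₁.ne' hq₂.ne')
  have : ((Finset.range (q₁ * q₂)).filter
      (fun a : ℕ => ((a : ℤ) ≡ c₁ [ZMOD (q₁ : ℤ)]) ∧ ((a : ℤ) ≡ c₂ [ZMOD (q₂ : ℤ)]))).card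
      ≤ (Finset.range (Nat.gcd q₁ q₂)).card := by
    apply Finset.card_le_card_of_injOn (fun b => b / L)
    · intro b hb
      rw [Finset.mem_coe, Finset.mem_filter, Finset.mem_range] at hb
      rw [Finset.mem_coe, Finset.mem_range]
      rw [Nat.div_lt_iff_lt_mul hL]
      calc b < q₁ * q₂ := hb.1
        _ = Nat.gcd q₁ q₂ * L := (Nat.gcd_mul_lcm q₁ q₂).symm
    · intro b hb b' hb' hbb
      simp only [Finset.coe_filter, Set.mem_setOf_eq, Finset.mem_range] at hb hb'
      have hmod : b % L = b' % L := by
        have h1 : (b : ℤ) ≡ (b' : ℤ) [ZMOD (q₁ : ℤ)] := hb.2.1.trans hb'.2.1.symm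
        have h2 : (b : ℤ) ≡ (b' : ℤ) [ZMOD (q₂ : ℤ)] := hb.2.2.trans hb'.2.2.symm
        have hdvd : ((L : ℕ) : ℤ) ∣ (b' : ℤ) - (b : ℤ) := by
          have := Int.coe_lcm_dvd (Int.ModEq.dvd h1) (Int.ModEq.dvd h2)
          simpa [Int.lcm, hLdef] using this
        have : (b : ℤ) ≡ (b' : ℤ) [ZMOD (L : ℤ)] := Int.modEq_iff_dvd.mpr hdvd
        exact Int.natCast_modEq_iff.mp this
      have hq : b / L = b' / L := hbb
      calc b = L * (b / L) + b % L := (Nat.div_add_mod b L).symm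
        _ = L * (b' / L) + b' % L := by rw [hq, hmod]
        _ = b' := Nat.div_add_mod b' L
  simpa using this

lemma sum_decompose (Q M : ℕ) (hQ : 0 < Q) (P : ℕ → Prop) [DecidablePred P]
    (hP : ∀ b k, P (b + Q * k) ↔ P b) (F : ℕ → ℂ) :
    ∑ a ∈ (Finset.range (Q * M)).filter P, F a
      = ∑ b ∈ (Finset.range Q).filter P, ∑ k ∈ Finset.range M, F (b + Q * k) := by
  rw [Finset.sum_filter, Finset.sum_filter]
  calc ∑ a ∈ Finset.range (Q * M), ite (P a) (F a) 0
      = ∑ bk ∈ Finset.range Q ×ˢ Finset.range M,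
          ite (P (bk.1 + Q * bk.2)) (F (bk.1 + Q * bk.2)) 0 := by
        refine (Finset.sum_nbij' (fun (bk : ℕ × ℕ) => bk.1 + Q * bk.2)
          (fun a => (a % Q, a / Q)) ?_ ?_ ?_ ?_ ?_).symm
        · intro bk hbk
          rw [Finset.mem_product, Finset.mem_range, Finset.mem_range] at hbk
          rw [Finset.mem_range]
          calc bk.1 + Q * bk.2 < Q + Q * bk.2 := by omega
            _ = Q * (bk.2 + 1) := by ring
            _ ≤ Q * M := Nat.mul_le_mul_left Q hbk.2
        · intro a ha
          rw [Finset.mem_range] at ha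
          rw [Finset.mem_product, Finset.mem_range, Finset.mem_range]
          refine ⟨Nat.mod_lt _ hQ, ?_⟩
          rw [Nat.div_lt_iff_lt_mul hQ]
          calc a < Q * M := ha
            _ = M * Q := Nat.mul_comm _ _
        · intro bk hbk
          rw [Finset.mem_product, Finset.mem_range, Finset.mem_range] at hbk
          have h1 : (bk.1 + Q * bk.2) % Q = bk.1 := by
            rw [Nat.add_mul_mod_self_left, Nat.mod_eq_of_lt hbk.1]
          have h2 : (bk.1 + Q * bk.2) / Q = bk.2 := by
            rw [Nat.add_mul_div_left _ _ hQ, Nat.div_eq_of_lt hbk.1, Nat.zero_add]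
          beta_reduce
          rw [h1, h2]
        · intro a _
          exact Nat.mod_add_div a Q
        · intro bk _
          rfl
    _ = ∑ b ∈ Finset.range Q, ∑ k ∈ Finset.range M,
          ite (P (b + Q * k)) (F (b + Q * k)) 0 := Finset.sum_product _ _ _
    _ = ∑ b ∈ Finset.range Q, ite (P b) (∑ k ∈ Finset.range M, F (b + Q * k)) 0 := by
        refine Finset.sum_congr rfl fun b _ => ?_
        by_cases hb : P b
        · rw [if_pos hb]
          exact Finset.sum_congr rfl fun k _ => if_pos ((hP b k).mpr hb)
        · rw [if_neg hb]
          exact Finset.sum_eq_zero fun k _ => if_neg fun h => hb ((hP b k).mp h)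

open scoped Classical in
lemma do_set_eq (N : ℕ) :
    ((Finset.range N : Finset ℕ) >>= fun a => (pure ((a : ℕ) : ℤ) : Finset ℤ))
      = (Finset.range N).image (fun a : ℕ => (a : ℤ)) := by
  ext x
  simp [Finset.bind_def, Finset.mem_sup]

/-- Bound for the zero frequency: `|𝔠(m₁, m₂, 0; q₁, q₂)| ≤ gcd(q₁,q₂) · gcd(m₁ - m₂, M₁)`. -/
theorem frakC_zero_bound (M₁ M₂ M₃ : ℕ) [Fact M₁.Prime] [Fact M₂.Prime] [Fact M₃.Prime]
    (h₁₂ : M₁ ≠ M₂) (h₁₃ : M₁ ≠ M₃) (h₂₃ : M₂ ≠ M₃)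
    (χ₁ : MulChar (ZMod M₁) ℂ) (hχ₁ : χ₁ ≠ 1)
    (q₁ q₂ : ℕ) (hq₁ : 0 < q₁) (hq₂ : 0 < q₂)
    (hcop₁ : Nat.Coprime q₁ (M₁ * M₃)) (hcop₂ : Nat.Coprime q₂ (M₁ * M₃))
    (m₁ m₂ M₃bar : ℤ) (hinv : (M₃ : ℤ) * M₃bar ≡ 1 [ZMOD ((q₁ * q₂ : ℕ) : ℤ)]) :
    ‖frakC M₁ M₂ M₃ q₁ q₂ χ₁ M₃bar m₁ m₂ 0‖ ≤
      (Nat.gcd q₁ q₂ : ℝ) * (Int.gcd (m₁ - m₂) (M₁ : ℤ) : ℝ) := by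
  classical
  have hp1 : M₁.Prime := Fact.out
  have hp2 : M₂.Prime := Fact.out
  have hp3 : M₃.Prime := Fact.out
  have hM₁pos : 0 < M₁ := hp1.pos
  have hQpos : 0 < q₁ * q₂ := Nat.mul_pos hq₁ hq₂
  have hcop₁' : Nat.Coprime q₁ M₁ := Nat.Coprime.coprime_dvd_right (dvd_mul_right M₁ M₃) hcop₁
  have hcop₂' : Nat.Coprime q₂ M₁ := Nat.Coprime.coprime_dvd_right (dvd_mul_right M₁ M₃) hcop₂
  have hcopQ : Nat.Coprime (q₁ * q₂) M₁ := Nat.Coprime.mul hcop₁' hcop₂'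
  have hQne : ((q₁ * q₂ : ℕ) : ZMod M₁) ≠ 0 := by
    rw [Ne, ZMod.natCast_eq_zero_iff]
    intro h
    have h1 : M₁ ∣ Nat.gcd (q₁ * q₂) M₁ := Nat.dvd_gcd h dvd_rfl
    rw [hcopQ] at h1
    exact hp1.one_lt.ne' (Nat.eq_one_of_dvd_one h1)
  have hM₃ne : ((M₃ : ℕ) : ZMod M₁) ≠ 0 := by
    rw [Ne, ZMod.natCast_eq_zero_iff]
    intro h
    exact h₁₃ ((Nat.prime_dvd_prime_iff_eq hp1 hp3).mp h)
  set A₁ : ZMod M₁ := (((M₂ : ℤ) * m₁ : ℤ) : ZMod M₁) with hA₁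
  set A₂ : ZMod M₁ := (((M₂ : ℤ) * m₂ : ℤ) : ZMod M₁) with hA₂
  set c : ZMod M₁ := A₂ - A₁ with hc
  set S0 : ℂ := ∑ u : ZMod M₁, (starRingEnd ℂ) (χ₁ u) * χ₁ (u + c) with hS0
  set F : ℕ → ℂ := fun a =>
    (starRingEnd ℂ) (χ₁ (((M₂ : ℤ) * m₁ + (M₃ : ℤ) * a : ℤ) : ZMod M₁)) *
      χ₁ (((M₂ : ℤ) * m₂ + (M₃ : ℤ) * a : ℤ) : ZMod M₁) with hF
  set H : ZMod M₁ → ℂ := fun t =>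
    (starRingEnd ℂ) (χ₁ (A₁ + (M₃ : ZMod M₁) * t)) * χ₁ (A₂ + (M₃ : ZMod M₁) * t) with hH
  -- Step 1: remove the `e` factor
  have h1 : frakC M₁ M₂ M₃ q₁ q₂ χ₁ M₃bar m₁ m₂ 0
      = ∑ a ∈ (Finset.range (q₁ * q₂ * M₁)).filter
          (fun a : ℕ => ((a : ℤ) ≡ -((M₂ : ℤ) * M₃bar * m₁) [ZMOD (q₁ : ℤ)]) ∧
                ((a : ℤ) ≡ -((M₂ : ℤ) * M₃bar * m₂) [ZMOD (q₂ : ℤ)])), F a := by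
    unfold frakC e
    rw [do_set_eq, Finset.filter_image,
      Finset.sum_image (by intro x _ y _ h; exact Nat.cast_injective h)]
    simp only [zero_mul, Int.cast_zero, zero_div, Complex.ofReal_zero, mul_zero,
      Complex.exp_zero, mul_one, hF]
  -- Step 2: shift invariance of the congruence conditions
  have hPshift : ∀ b k : ℕ,
      ((((b + q₁ * q₂ * k : ℕ) : ℤ) ≡ -((M₂ : ℤ) * M₃bar * m₁) [ZMOD (q₁ : ℤ)]) ∧
        (((b + q₁ * q₂ * k : ℕ) : ℤ) ≡ -((M₂ : ℤ) * M₃bar * m₂) [ZMOD (q₂ : ℤ)])) ↔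
      ((((b : ℕ) : ℤ) ≡ -((M₂ : ℤ) * M₃bar * m₁) [ZMOD (q₁ : ℤ)]) ∧
        (((b : ℕ) : ℤ) ≡ -((M₂ : ℤ) * M₃bar * m₂) [ZMOD (q₂ : ℤ)])) := by
    intro b k
    have key1 : ((b : ℕ) : ℤ) ≡ ((b + q₁ * q₂ * k : ℕ) : ℤ) [ZMOD (q₁ : ℤ)] :=
      Int.modEq_iff_dvd.mpr ⟨q₂ * k, by push_cast; ring⟩
    have key2 : ((b : ℕ) : ℤ) ≡ ((b + q₁ * q₂ * k : ℕ) : ℤ) [ZMOD (q₂ : ℤ)] :=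
      Int.modEq_iff_dvd.mpr ⟨q₁ * k, by push_cast; ring⟩
    constructor
    · rintro ⟨ha, hb⟩
      exact ⟨key1.trans ha, key2.trans hb⟩
    · rintro ⟨ha, hb⟩
      exact ⟨key1.symm.trans ha, key2.symm.trans hb⟩
  -- Step 3: inner sum over a full period equals S0
  have haff : ∀ (d r : ZMod M₁), r ≠ 0 → Function.Bijective (fun t : ZMod M₁ => d + r * t) := by
    intro d r hr
    rw [Finite.injective_iff_bijective.symm]
    intro x y hxy
    have hxy' : r * x = r * y := by
      have : d + r * x = d + r * y := hxy
      linear_combination this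
    exact mul_left_cancel₀ hr hxy'
  have hinner : ∀ b : ℕ, ∑ k ∈ Finset.range M₁, F (b + q₁ * q₂ * k) = S0 := by
    intro b
    calc ∑ k ∈ Finset.range M₁, F (b + q₁ * q₂ * k)
        = ∑ k ∈ Finset.range M₁,
            H ((b : ZMod M₁) + ((q₁ * q₂ : ℕ) : ZMod M₁) * ((k : ℕ) : ZMod M₁)) := by
          refine Finset.sum_congr rfl fun k _ => ?_
          rw [hF, hH]
          simp only []
          congr 1
          · congr 1
            rw [hA₁]
            push_cast
            ring
          · congr 1
            rw [hA₂]
            push_cast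
            ring
      _ = ∑ t : ZMod M₁, H ((b : ZMod M₁) + ((q₁ * q₂ : ℕ) : ZMod M₁) * t) := by
          refine Finset.sum_nbij' (fun k : ℕ => ((k : ℕ) : ZMod M₁)) (fun t => t.val)
            ?_ ?_ ?_ ?_ ?_
          · intro k _
            exact Finset.mem_univ _
          · intro t _
            exact Finset.mem_range.mpr (ZMod.val_lt t)
          · intro k hk
            exact ZMod.val_natCast_of_lt (Finset.mem_range.mp hk)
          · intro t _
            simp [ZMod.natCast_val, ZMod.cast_id]
          · intro k _
            rfl
      _ = ∑ t : ZMod M₁, H t :=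
          Fintype.sum_bijective _ (haff _ _ hQne) _ _ (fun t => rfl)
      _ = S0 := by
          rw [hS0]
          refine Fintype.sum_bijective (fun t : ZMod M₁ => A₁ + (M₃ : ZMod M₁) * t)
            (haff _ _ hM₃ne) _ _ (fun t => ?_)
          rw [hH]
          simp only []
          congr 2
          rw [hc]
          ring
  -- Step 4: put everything together
  rw [h1, sum_decompose (q₁ * q₂) M₁ hQpos _ hPshift F,
    Finset.sum_congr rfl (fun b _ => hinner b), Finset.sum_const, nsmul_eq_mul,
    norm_mul, Complex.norm_natCast]
  have hcard : (((Finset.range (q₁ * q₂)).filter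
      (fun a : ℕ => ((a : ℤ) ≡ -((M₂ : ℤ) * M₃bar * m₁) [ZMOD (q₁ : ℤ)]) ∧
        ((a : ℤ) ≡ -((M₂ : ℤ) * M₃bar * m₂) [ZMOD (q₂ : ℤ)]))).card : ℝ)
      ≤ (Nat.gcd q₁ q₂ : ℝ) :=
    Nat.cast_le.mpr (count_bound q₁ q₂ hq₁ hq₂ _ _)
  have hSbound : ‖S0‖ ≤ (Int.gcd (m₁ - m₂) (M₁ : ℤ) : ℝ) := by
    by_cases hc0 : c = 0
    · have hA : A₁ = A₂ := by
        have := hc0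
        rw [hc, sub_eq_zero] at this
        exact this.symm
      have hdvd : (M₁ : ℤ) ∣ (m₁ - m₂) := by
        rw [hA₁, hA₂, ZMod.intCast_eq_intCast_iff] at hA
        have hd : (M₁ : ℤ) ∣ (M₂ : ℤ) * (m₂ - m₁) := by
          have := hA.dvd
          rw [show (M₂ : ℤ) * m₂ - (M₂ : ℤ) * m₁ = (M₂ : ℤ) * (m₂ - m₁) by ring] at this
          exact this
        rcases (Nat.prime_iff_prime_int.mp hp1).dvd_mul.mp hd with h | h
        · exact absurd ((Nat.prime_dvd_prime_iff_eq hp1 hp2).mp (Int.natCast_dvd_natCast.mp h))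
            h₁₂
        · have := dvd_neg.mpr h
          rwa [neg_sub] at this
      have hG : Int.gcd (m₁ - m₂) (M₁ : ℤ) = M₁ := by
        refine Nat.dvd_antisymm ?_ ?_
        · have hr : ((Int.gcd (m₁ - m₂) (M₁ : ℤ) : ℕ) : ℤ) ∣ (M₁ : ℤ) := Int.gcd_dvd_right _ _
          exact Int.ofNat_dvd.mp hr
        · exact Int.ofNat_dvd.mp (by exact_mod_cast Int.dvd_gcd hdvd dvd_rfl)
      rw [hG, hS0]
      exact charSum_bound₀ χ₁ c
    · rw [hS0, charSum_eq_neg_one χ₁ hχ₁ c hc0]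
      have h1le : 1 ≤ Int.gcd (m₁ - m₂) (M₁ : ℤ) := by
        rw [Nat.one_le_iff_ne_zero, Ne, Int.gcd_eq_zero_iff]
        rintro ⟨-, h⟩
        have hM0 : M₁ = 0 := by exact_mod_cast h
        exact hM₁pos.ne' hM0
      calc ‖(-1 : ℂ)‖ = 1 := by norm_num
        _ ≤ (Int.gcd (m₁ - m₂) (M₁ : ℤ) : ℝ) := by exact_mod_cast h1le
  exact mul_le_mul hcard hSbound (norm_nonneg _) (Nat.cast_nonneg _)
end
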